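/- Fix $\theta > 0$, $I > 0$, $\Omega_n, \Omega_f, \Omega_p > 0$ with $\Omega_n > \Omega_f$. Under the assumption $1/(1 - a_n(1+\theta)) > 1/a_n$ (i.e., $\xi_n = \theta/(1-a_n(1+\theta))$), the function $P(a_n) = 1 - \frac{\Omega_n}{\Omega_n + \Omega_p \xi_n/I}\cdot\frac{\Omega_f}{\Omega_f + \Omega_p \xi_f/I}$ with $\xi_f = \theta/(1 - a_n(1+\theta))$ has no stationary point in $(0, 1/(1+\theta))$: its derivative's zeros are $a_n = 1/(1+\theta)$ and $a_n = 1/(1+\theta) + 2\Omega_p\theta/(I(\Omega_n+\Omega_f)(1+\theta))$, both $\geq 1/(1+\theta)$. -/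

import Mathlib

open Real

/-- Infeasibility argument in Appendix C: when `ξn = θ/(1 - a(1+θ))` (SIC-dominated
regime), the single-antenna IntICSI outage probability has no stationary point in
`(0, 1/(1+θ))`; the candidate zeros of its derivative, `1/(1+θ)` and
`1/(1+θ) + 2Ωpθ/(I(Ωn+Ωf)(1+θ))`, are both `≥ 1/(1+θ)`. -/
theorem no_stationary_point_sic_regime (θ I Ωn Ωf Ωp : ℝ) (hθ : 0 < θ) (hI : 0 < I)
    (hΩn : 0 < Ωn) (hΩf : 0 < Ωf) (hΩp : 0 < Ωp) (hord : Ωf < Ωn) :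
    let ξ : ℝ → ℝ := fun a => θ / (1 - a * (1 + θ))
    let P : ℝ → ℝ := fun a =>
      1 - (Ωn / (Ωn + Ωp * ξ a / I)) * (Ωf / (Ωf + Ωp * ξ a / I))
    (∀ a ∈ Set.Ioo (0 : ℝ) (1 / (1 + θ)), deriv P a ≠ 0) ∧
      1 / (1 + θ) ≤ 1 / (1 + θ) + 2 * Ωp * θ / (I * (Ωn + Ωf) * (1 + θ)) := by
  intro ξ P
  have hθ1 : 0 < 1 + θ := by linarith
  constructor
  · rintro a ⟨ha0, ha1⟩ hder
    have hu : 0 < 1 - a * (1 + θ) := by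
      have : a * (1 + θ) < 1 := (lt_div_iff₀ hθ1).mp ha1
      linarith
    have h1 : HasDerivAt (fun x : ℝ => 1 - x * (1 + θ)) (-(1 + θ)) a := by
      simpa using ((hasDerivAt_id a).mul_const (1 + θ)).const_sub 1
    have hξ : HasDerivAt ξ (θ * (1 + θ) / (1 - a * (1 + θ)) ^ 2) a := by
      have h : HasDerivAt ξ ((0 * (1 - a * (1 + θ)) - θ * -(1 + θ)) / (1 - a * (1 + θ)) ^ 2) a :=
        (hasDerivAt_const a θ).div h1 hu.ne'
      convert h using 1
      ring
    have hξa : 0 < ξ a := div_pos hθ hu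
    have hξd : 0 < θ * (1 + θ) / (1 - a * (1 + θ)) ^ 2 :=
      div_pos (mul_pos hθ hθ1) (pow_pos hu 2)
    set ξd := θ * (1 + θ) / (1 - a * (1 + θ)) ^ 2 with hξddef
    have hd1 : 0 < Ωn + Ωp * ξ a / I := by positivity
    have hd2 : 0 < Ωf + Ωp * ξ a / I := by positivity
    have hD1 : HasDerivAt (fun x => Ωn + Ωp * ξ x / I) (Ωp * ξd / I) a :=
      ((hξ.const_mul Ωp).div_const I).const_add Ωn
    have hD2 : HasDerivAt (fun x => Ωf + Ωp * ξ x / I) (Ωp * ξd / I) a :=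
      ((hξ.const_mul Ωp).div_const I).const_add Ωf
    have hf1 : HasDerivAt (fun x => Ωn / (Ωn + Ωp * ξ x / I))
        ((0 * (Ωn + Ωp * ξ a / I) - Ωn * (Ωp * ξd / I)) / (Ωn + Ωp * ξ a / I) ^ 2) a :=
      (hasDerivAt_const a Ωn).div hD1 hd1.ne'
    have hf2 : HasDerivAt (fun x => Ωf / (Ωf + Ωp * ξ x / I))
        ((0 * (Ωf + Ωp * ξ a / I) - Ωf * (Ωp * ξd / I)) / (Ωf + Ωp * ξ a / I) ^ 2) a :=
      (hasDerivAt_const a Ωf).div hD2 hd2.ne'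
    have hP : HasDerivAt P
        (-(((0 * (Ωn + Ωp * ξ a / I) - Ωn * (Ωp * ξd / I)) / (Ωn + Ωp * ξ a / I) ^ 2) *
            (Ωf / (Ωf + Ωp * ξ a / I)) +
          (Ωn / (Ωn + Ωp * ξ a / I)) *
            ((0 * (Ωf + Ωp * ξ a / I) - Ωf * (Ωp * ξd / I)) / (Ωf + Ωp * ξ a / I) ^ 2))) a :=
      (hf1.mul hf2).const_sub 1
    have he1 : (0 * (Ωn + Ωp * ξ a / I) - Ωn * (Ωp * ξd / I)) / (Ωn + Ωp * ξ a / I) ^ 2 < 0 := by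
      apply div_neg_of_neg_of_pos
      · have : 0 < Ωn * (Ωp * ξd / I) := by positivity
        linarith
      · positivity
    have he2 : (0 * (Ωf + Ωp * ξ a / I) - Ωf * (Ωp * ξd / I)) / (Ωf + Ωp * ξ a / I) ^ 2 < 0 := by
      apply div_neg_of_neg_of_pos
      · have : 0 < Ωf * (Ωp * ξd / I) := by positivity
        linarith
      · positivity
    have hv1 : 0 < Ωn / (Ωn + Ωp * ξ a / I) := by positivity
    have hv2 : 0 < Ωf / (Ωf + Ωp * ξ a / I) := by positivity
    rw [hP.deriv] at hder
    nlinarith [mul_pos hv1 (neg_pos.mpr he2), mul_pos (neg_pos.mpr he1) hv2]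
  · have h : 0 ≤ 2 * Ωp * θ / (I * (Ωn + Ωf) * (1 + θ)) := by positivity
    linarith
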